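/- arXiv:2507.21334 — 2 statements merged into one kernel-verified Lean document; each statement's English description precedes it below -/
import Mathlib

section
/- The SCL choice probability can be written in multinomial-logit form: P_{ni} = exp(Ṽ_{ni}) / Σ_{k∈V} exp(Ṽ_{nk}), where Ṽ_{ni} = log( Σ_{j∈N(i)} exp( V⁰_{ni} + (μ−1)·log(exp(V⁰_{ni}) + exp(V⁰_{nj})) ) ) and V⁰_{ni} = V_{ni}/μ + (1/μ)·log α_{i,ij}, assuming all allocation parameters for a given alternative i are equal across its neighbors, α_{i,ij} = α_i for all j ∈ N(i). -/
open Real Finset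

lemma sum_edge_lift_aux {ι : Type*} [Fintype ι] (G : SimpleGraph ι) [DecidableRel G.Adj]
    (f : ι → ι → ℝ) (g : Sym2 ι → ℝ)
    (hf : ∀ k l, G.Adj k l → g s(k, l) = f k l + f l k) :
    ∑ e ∈ G.edgeFinset, g e = ∑ k, ∑ j ∈ G.neighborFinset k, f k j := by
  classical
  have h1 : ∑ k, ∑ j ∈ G.neighborFinset k, f k j = ∑ d : G.Dart, f d.fst d.snd := by
    rw [← Finset.sum_fiberwise_of_maps_to (g := fun d : G.Dart => d.fst)
      (fun d _ => Finset.mem_univ d.fst) (fun d : G.Dart => f d.fst d.snd)]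
    refine Finset.sum_congr rfl fun k _ => ?_
    have : (Finset.univ.filter fun d : G.Dart => d.fst = k)
        = Finset.univ.image (G.dartOfNeighborSet k) := by
      simpa using G.dart_fst_fiber k
    rw [this, Finset.sum_image (fun a _ b _ h => G.dartOfNeighborSet_injective k h)]
    have : ∑ w : G.neighborSet k, f k w
        = ∑ j ∈ G.neighborFinset k, f k j := by
      rw [Finset.sum_set_coe (f := fun j => f k j) (G.neighborSet k)]
      rfl
    exact this.symm
  have h2 : ∑ d : G.Dart, f d.fst d.snd = ∑ e ∈ G.edgeFinset, g e := by
    rw [← Finset.sum_fiberwise_of_maps_to (g := SimpleGraph.Dart.edge)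
      (fun d _ => (SimpleGraph.mem_edgeFinset).2 d.edge_mem) (fun d => f d.fst d.snd)]
    refine Finset.sum_congr rfl fun e he => ?_
    rw [SimpleGraph.mem_edgeFinset] at he
    induction e with
    | _ v w =>
      have hadj : G.Adj v w := he
      set d : G.Dart := ⟨(v, w), hadj⟩ with hd
      have hfib : (Finset.univ.filter fun d' : G.Dart => d'.edge = s(v, w))
          = {d, d.symm} := by
        have := SimpleGraph.Dart.edge_fiber d
        exact this
      rw [hfib, Finset.sum_pair d.symm_ne.symm]
      rw [hf v w hadj]
      rfl
  exact (h1.trans h2).symm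

/-- The SCL choice probability, with equal allocation parameters `α i` across the
neighbors of each alternative `i`, can be written in multinomial-logit (softmax) form
with transformed utilities `Ṽ`. -/
theorem scl_softmax_form
    {ι : Type*} [Fintype ι] (G : SimpleGraph ι) [DecidableRel G.Adj]
    (hG : ∀ i : ι, (G.neighborFinset i).Nonempty)
    (μ : ℝ) (hμ0 : 0 < μ) (hμ1 : μ ≤ 1)
    (α : ι → ℝ) (hα : ∀ i, α i ∈ Set.Ioo (0 : ℝ) 1)
    (V : ι → ℝ) (i : ι)
    (V0 : ι → ℝ) (hV0 : ∀ i, V0 i = V i / μ + (1 / μ) * Real.log (α i))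
    (W : ι → ℝ)
    (hW : ∀ i, W i = Real.log (∑ j ∈ G.neighborFinset i,
        Real.exp (V0 i + (μ - 1) * Real.log (Real.exp (V0 i) + Real.exp (V0 j))))) :
    (∑ j ∈ G.neighborFinset i,
        (α i * Real.exp (V i)) ^ (1 / μ) *
          ((α i * Real.exp (V i)) ^ (1 / μ) + (α j * Real.exp (V j)) ^ (1 / μ)) ^ (μ - 1)) /
      (∑ e ∈ G.edgeFinset, Sym2.lift
        ⟨fun k l => ((α k * Real.exp (V k)) ^ (1 / μ) + (α l * Real.exp (V l)) ^ (1 / μ)) ^ μ,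
         fun k l => by dsimp only; rw [add_comm]⟩ e) =
    Real.exp (W i) / ∑ k : ι, Real.exp (W k) := by
  classical
  -- basic power identity
  have key : ∀ k, (α k * Real.exp (V k)) ^ (1 / μ) = Real.exp (V0 k) := by
    intro k
    have hαk : (0 : ℝ) < α k := (hα k).1
    have hpos : (0 : ℝ) < α k * Real.exp (V k) := by positivity
    rw [Real.rpow_def_of_pos hpos, Real.log_mul (ne_of_gt hαk) (Real.exp_ne_zero _),
      Real.log_exp, hV0]
    congr 1
    field_simp
    ring
  -- the per-pair term
  have term : ∀ k l, Real.exp (V0 k) * (Real.exp (V0 k) + Real.exp (V0 l)) ^ (μ - 1)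
      = Real.exp (V0 k + (μ - 1) * Real.log (Real.exp (V0 k) + Real.exp (V0 l))) := by
    intro k l
    have hpos : (0 : ℝ) < Real.exp (V0 k) + Real.exp (V0 l) := by positivity
    rw [Real.rpow_def_of_pos hpos, ← Real.exp_add]
    ring_nf
  -- numerator
  have hnum : (∑ j ∈ G.neighborFinset i,
      (α i * Real.exp (V i)) ^ (1 / μ) *
        ((α i * Real.exp (V i)) ^ (1 / μ) + (α j * Real.exp (V j)) ^ (1 / μ)) ^ (μ - 1))
      = Real.exp (W i) := by
    rw [hW i, Real.exp_log]
    · refine Finset.sum_congr rfl fun j _ => ?_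
      rw [key i, key j, term]
    · obtain ⟨j, hj⟩ := hG i
      refine Finset.sum_pos (fun j _ => Real.exp_pos _) ⟨j, hj⟩
  -- denominator
  have hden : (∑ e ∈ G.edgeFinset, Sym2.lift
      ⟨fun k l => ((α k * Real.exp (V k)) ^ (1 / μ) + (α l * Real.exp (V l)) ^ (1 / μ)) ^ μ,
       fun k l => by dsimp only; rw [add_comm]⟩ e)
      = ∑ k : ι, Real.exp (W k) := by
    rw [sum_edge_lift_aux G
      (fun k l => Real.exp (V0 k + (μ - 1) * Real.log (Real.exp (V0 k) + Real.exp (V0 l))))]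
    · refine Finset.sum_congr rfl fun k _ => ?_
      rw [hW k, Real.exp_log]
      obtain ⟨j, hj⟩ := hG k
      exact Finset.sum_pos (fun j _ => Real.exp_pos _) ⟨j, hj⟩
    · intro k l _
      simp only [Sym2.lift_mk]
      rw [key k, key l, ← term k l, ← term l k]
      have hpos : (0 : ℝ) < Real.exp (V0 k) + Real.exp (V0 l) := by positivity
      have : (Real.exp (V0 k) + Real.exp (V0 l)) ^ μ
          = (Real.exp (V0 k) + Real.exp (V0 l)) ^ (μ - 1)
            * (Real.exp (V0 k) + Real.exp (V0 l)) := by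
        have h := Real.rpow_add_one (ne_of_gt hpos) (μ - 1)
        simpa using h
      rw [this, add_comm (Real.exp (V0 l)) (Real.exp (V0 k))]
      ring
  rw [hnum, hden]
end

section
/- When μ = 1 and the allocation parameters of each alternative sum to one over its neighbors (Σ_{j∈N(i)} α_{i,ij} = 1), the SCL choice probability reduces to the multinomial logit probability P_{ni} = exp(V_{ni}) / Σ_k exp(V_{nk}). -/
open Real Finset

lemma dart_sum_eq_edge_sum {ι : Type*} [Fintype ι] (G : SimpleGraph ι) [DecidableRel G.Adj]
    (f : ι → ι → ℝ) (hf : ∀ k l, f k l + f l k = f l k + f k l) :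
    ∑ d : G.Dart, f d.fst d.snd =
      ∑ e ∈ G.edgeFinset, Sym2.lift ⟨fun k l => f k l + f l k, hf⟩ e := by
  classical
  rw [← Finset.sum_fiberwise_of_maps_to (s := Finset.univ) (t := G.edgeFinset)
    (g := SimpleGraph.Dart.edge)
    (fun d _ => by rw [SimpleGraph.mem_edgeFinset]; exact d.edge_mem)]
  refine Finset.sum_congr rfl fun e he => ?_
  rw [SimpleGraph.mem_edgeFinset] at he
  induction' e with v w
  have hadj : G.Adj v w := he
  let d : G.Dart := ⟨(v, w), hadj⟩
  have hfib : (Finset.univ.filter fun d' : G.Dart => d'.edge = d.edge) = {d, d.symm} :=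
    SimpleGraph.Dart.edge_fiber d
  have : (Finset.univ.filter fun d' : G.Dart => d'.edge = s(v, w)) = {d, d.symm} := by
    exact hfib
  rw [this, Finset.sum_pair d.symm_ne.symm]
  simp [d, SimpleGraph.Dart.symm]

lemma dart_sum_eq_nbr_sum {ι : Type*} [Fintype ι] (G : SimpleGraph ι) [DecidableRel G.Adj]
    (f : ι → ι → ℝ) :
    ∑ d : G.Dart, f d.fst d.snd =
      ∑ v : ι, ∑ w ∈ G.neighborFinset v, f v w := by
  classical
  rw [← Finset.sum_fiberwise_of_maps_to (s := Finset.univ) (t := Finset.univ)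
    (g := fun d : G.Dart => d.fst)
    (fun d _ => Finset.mem_univ _)]
  refine Finset.sum_congr rfl fun v _ => ?_
  refine Finset.sum_bij (fun d _ => d.snd) ?_ ?_ ?_ ?_
  · intro d hd
    simp only [Finset.mem_filter] at hd
    rw [SimpleGraph.mem_neighborFinset]
    exact hd.2 ▸ d.adj
  · intro a ha b hb h
    simp only [Finset.mem_filter] at ha hb
    exact SimpleGraph.Dart.ext _ _ (Prod.ext (ha.2.trans hb.2.symm) h)
  · intro w hw
    rw [SimpleGraph.mem_neighborFinset] at hw
    exact ⟨⟨(v, w), hw⟩, by simp, rfl⟩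
  · intro d hd
    simp only [Finset.mem_filter] at hd
    rw [hd.2]

/-- When `μ = 1` and each alternative's allocation parameters sum to one over its
neighbors, the SCL choice probability reduces to the multinomial logit probability. -/
theorem scl_reduces_to_mnl
    {ι : Type*} [Fintype ι] (G : SimpleGraph ι) [DecidableRel G.Adj]
    (hG : ∀ i : ι, (G.neighborFinset i).Nonempty)
    (μ : ℝ) (hμ : μ = 1)
    (α : ι → ι → ℝ) (hα : ∀ i j, j ∈ G.neighborFinset i → α i j ∈ Set.Ioo (0 : ℝ) 1)
    (hsum : ∀ i : ι, ∑ j ∈ G.neighborFinset i, α i j = 1)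
    (V : ι → ℝ) (i : ι) :
    (∑ j ∈ G.neighborFinset i,
        (α i j * Real.exp (V i)) ^ (1 / μ) *
          ((α i j * Real.exp (V i)) ^ (1 / μ) + (α j i * Real.exp (V j)) ^ (1 / μ)) ^ (μ - 1)) /
      (∑ e ∈ G.edgeFinset, Sym2.lift
        ⟨fun k l => ((α k l * Real.exp (V k)) ^ (1 / μ) + (α l k * Real.exp (V l)) ^ (1 / μ)) ^ μ,
         fun k l => by dsimp only; rw [add_comm]⟩ e) =
    Real.exp (V i) / ∑ k : ι, Real.exp (V k) := by
  subst hμ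
  simp only [one_div, inv_one, Real.rpow_one, sub_self, Real.rpow_zero, mul_one]
  have hnum : ∑ j ∈ G.neighborFinset i, α i j * Real.exp (V i) = Real.exp (V i) := by
    rw [← Finset.sum_mul, hsum, one_mul]
  rw [hnum]
  congr 1
  have _hlift : ∀ e ∈ G.edgeFinset,
      Sym2.lift ⟨fun k l => ((α k l * Real.exp (V k)) ^ (1:ℝ) + (α l k * Real.exp (V l)) ^ (1:ℝ)) ^ (1:ℝ),
        fun k l => by dsimp only; rw [add_comm]⟩ e =
      Sym2.lift ⟨fun k l => α k l * Real.exp (V k) + α l k * Real.exp (V l),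
        fun k l => by dsimp only; rw [add_comm]⟩ e := by
    intro e _
    induction' e with v w
    simp
  rw [← dart_sum_eq_edge_sum G (fun k l => α k l * Real.exp (V k)) (fun k l => add_comm _ _),
    dart_sum_eq_nbr_sum G (fun k l => α k l * Real.exp (V k))]
  refine Finset.sum_congr rfl fun v _ => ?_
  rw [← Finset.sum_mul, hsum, one_mul]
end
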